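/- arXiv:1205.0047 — 2 statements merged into one kernel-verified Lean document; each statement's English description precedes it below -/
import Mathlib

section
/- Let {z_t} be a real-valued sequence satisfying z_{t+1} ≤ (1 − α_t) z_t + α_t ε_t for all t, where {α_t} and {ε_t} are real sequences with α_t ∈ [0,1] for all t and ∑_{t≥0} α_t = ∞, and suppose there exists a constant R > 0 with limsup_{t→∞} ε_t ≤ R. Then limsup_{t→∞} z_t ≤ R. -/
open Filter

/-- Proposition `decsup`. If `z_{t+1} ≤ (1 − α_t) z_t + α_t ε_t` with
`α_t ∈ [0,1]`, `∑ α_t = ∞`, and `limsup ε_t ≤ R` for some constant `R > 0`, then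
`limsup z_t ≤ R`.  (The limsups are taken in the extended reals so that they are
well-defined for arbitrary real sequences.) -/
theorem limsup_le_of_recursive_bound (z α ε : ℕ → ℝ) (R : ℝ) (hR : 0 < R)
    (hα : ∀ t, α t ∈ Set.Icc (0 : ℝ) 1)
    (hαdiv : Tendsto (fun T => ∑ t ∈ Finset.range T, α t) atTop atTop)
    (hrec : ∀ t, z (t + 1) ≤ (1 - α t) * z t + α t * ε t)
    (hε : limsup (fun t => (ε t : EReal)) atTop ≤ (R : EReal)) :
    limsup (fun t => (z t : EReal)) atTop ≤ (R : EReal) := by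
  have key : ∀ δ : ℝ, 0 < δ → ∀ᶠ t in atTop, z t ≤ R + δ := by
    intro δ hδ
    set c := R + δ / 2 with hc
    have hlt : limsup (fun t => (ε t : EReal)) atTop < ((c : ℝ) : EReal) := by
      refine lt_of_le_of_lt hε ?_
      exact_mod_cast (by rw [hc]; linarith : R < c)
    have hev : ∀ᶠ t in atTop, (ε t : EReal) < ((c : ℝ) : EReal) :=
      eventually_lt_of_limsup_lt hlt
    obtain ⟨T, hT⟩ := eventually_atTop.1 hev
    have hε' : ∀ t, T ≤ t → ε t ≤ c := fun t ht => le_of_lt (by exact_mod_cast hT t ht)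
    set M := max (z T - c) 0 with hM
    have hM0 : 0 ≤ M := le_max_right _ _
    have hw : ∀ t, T ≤ t → z t - c ≤ (∏ s ∈ Finset.Ico T t, (1 - α s)) * M := by
      intro t ht
      induction t, ht using Nat.le_induction with
      | base => simp [hM, le_max_left]
      | succ t ht ih =>
        have h1 : z (t + 1) - c ≤ (1 - α t) * (z t - c) := by
          have := hrec t
          have hεc := hε' t ht
          have hα0 := (hα t).1
          nlinarith
        have h2 : (1 - α t) * (z t - c) ≤ (1 - α t) * ((∏ s ∈ Finset.Ico T t, (1 - α s)) * M) := by
          apply mul_le_mul_of_nonneg_left ih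
          linarith [(hα t).2]
        rw [Finset.prod_Ico_succ_top ht]
        calc z (t + 1) - c ≤ (1 - α t) * ((∏ s ∈ Finset.Ico T t, (1 - α s)) * M) :=
              le_trans h1 h2
          _ = (∏ s ∈ Finset.Ico T t, (1 - α s)) * (1 - α t) * M := by ring
    -- product bound by exponential
    have hprod : ∀ t, (∏ s ∈ Finset.Ico T t, (1 - α s)) ≤
        Real.exp (-(∑ s ∈ Finset.Ico T t, α s)) := by
      intro t
      have hrw : Real.exp (-(∑ s ∈ Finset.Ico T t, α s)) =
          ∏ s ∈ Finset.Ico T t, Real.exp (-(α s)) := by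
        rw [← Real.exp_sum]; congr 1; rw [Finset.sum_neg_distrib]
      rw [hrw]
      apply Finset.prod_le_prod
      · intro s _; linarith [(hα s).2]
      · intro s _
        have := Real.add_one_le_exp (-(α s))
        linarith [Real.add_one_le_exp (-(α s))]
    have hS : Tendsto (fun t => ∑ s ∈ Finset.Ico T t, α s) atTop atTop := by
      have heq : ∀ᶠ t in atTop, ∑ s ∈ Finset.range t, α s - ∑ s ∈ Finset.range T, α s
          = ∑ s ∈ Finset.Ico T t, α s := by
        filter_upwards [eventually_ge_atTop T] with t ht
        rw [Finset.sum_Ico_eq_sub _ ht]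
      exact Tendsto.congr' heq (tendsto_atTop_add_const_right _ _ hαdiv)
    have hexp : Tendsto (fun t => M * Real.exp (-(∑ s ∈ Finset.Ico T t, α s))) atTop (nhds 0) := by
      have : Tendsto (fun t => Real.exp (-(∑ s ∈ Finset.Ico T t, α s))) atTop (nhds 0) :=
        Real.tendsto_exp_atBot.comp (tendsto_neg_atTop_atBot.comp hS)
      simpa using this.const_mul M
    have hsmall : ∀ᶠ t in atTop, M * Real.exp (-(∑ s ∈ Finset.Ico T t, α s)) < δ / 2 := by
      have := hexp.eventually_lt_const (by linarith : (0:ℝ) < δ / 2)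
      exact this
    filter_upwards [eventually_ge_atTop T, hsmall] with t ht hs
    have h1 := hw t ht
    have h2 : (∏ s ∈ Finset.Ico T t, (1 - α s)) * M ≤
        Real.exp (-(∑ s ∈ Finset.Ico T t, α s)) * M :=
      mul_le_mul_of_nonneg_right (hprod t) hM0
    have : z t - c ≤ M * Real.exp (-(∑ s ∈ Finset.Ico T t, α s)) := by
      calc z t - c ≤ _ := h1
        _ ≤ _ := h2
        _ = M * Real.exp (-(∑ s ∈ Finset.Ico T t, α s)) := mul_comm _ _
    simp only [hc] at this ⊢
    linarith
  have key' : ∀ δ : ℝ, 0 < δ → limsup (fun t => (z t : EReal)) atTop ≤ ((R + δ : ℝ) : EReal) := by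
    intro δ hδ
    refine limsup_le_of_le (by isBoundedDefault) ?_
    filter_upwards [key δ hδ] with t ht
    exact_mod_cast ht
  by_contra h
  push_neg at h
  obtain ⟨x, hRx, hxl⟩ := EReal.exists_between_coe_real h
  have hx : 0 < x - R := by
    have : (R : EReal) < (x : EReal) := hRx
    have := EReal.coe_lt_coe_iff.1 this
    linarith
  have := key' (x - R) hx
  rw [show R + (x - R) = x by ring] at this
  exact absurd this (not_le.2 hxl)
end

section
/- Let {y_t} be a real-valued sequence satisfying y_{t+1} = (1 − α_t) y_t + α_t ε_t for all t, where α_t ∈ [0,1] for all t, ∑_{t≥0} α_t = ∞, and ε_t → 0 as t → ∞. Then y_t → 0 as t → ∞. -/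
open Filter

/-- If `y_{t+1} = (1 − α_t) y_t + α_t ε_t` with `α_t ∈ [0,1]`,
`∑ α_t = ∞`, and `ε_t → 0`, then `y_t → 0`. -/
theorem tendsto_zero_of_recursion (y α ε : ℕ → ℝ)
    (hα : ∀ t, α t ∈ Set.Icc (0 : ℝ) 1)
    (hαdiv : Tendsto (fun T => ∑ t ∈ Finset.range T, α t) atTop atTop)
    (hrec : ∀ t, y (t + 1) = (1 - α t) * y t + α t * ε t)
    (hε : Tendsto ε atTop (nhds 0)) :
    Tendsto y atTop (nhds 0) := by
  rw [Metric.tendsto_atTop]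
  intro e he
  set δ := e / 3 with hδdef
  have hδpos : 0 < δ := by positivity
  obtain ⟨N, hN⟩ := (Metric.tendsto_atTop.mp hε) δ hδpos
  have hεb : ∀ t, N ≤ t → |ε t| ≤ δ := fun t ht => by
    have := hN t ht
    rw [Real.dist_eq, sub_zero] at this
    exact this.le
  have h1 : ∀ s, 0 ≤ 1 - α s := fun s => by linarith [(hα s).2]
  have h2 : ∀ s, 1 - α s ≤ Real.exp (-(α s)) := fun s => by
    have := Real.add_one_le_exp (-(α s)); linarith
  -- key inductive bound
  have key : ∀ t, N ≤ t → |y t| ≤ δ + (∏ s ∈ Finset.Ico N t, (1 - α s)) * |y N| := by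
    intro t ht
    induction t, ht using Nat.le_induction with
    | base => simp; positivity
    | succ t ht ih =>
      have hb : |y (t + 1)| ≤ (1 - α t) * |y t| + α t * δ := by
        calc |y (t + 1)| = |(1 - α t) * y t + α t * ε t| := by rw [hrec t]
          _ ≤ |(1 - α t) * y t| + |α t * ε t| := abs_add_le _ _
          _ = (1 - α t) * |y t| + α t * |ε t| := by
              rw [abs_mul, abs_mul, abs_of_nonneg (h1 t), abs_of_nonneg (hα t).1]
          _ ≤ (1 - α t) * |y t| + α t * δ := by
              have h3 := hεb t ht
              have h4 := (hα t).1
              nlinarith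
      have hstep : (1 - α t) * |y t| ≤
          (1 - α t) * (δ + (∏ s ∈ Finset.Ico N t, (1 - α s)) * |y N|) :=
        mul_le_mul_of_nonneg_left ih (h1 t)
      have hprod : ∏ s ∈ Finset.Ico N (t + 1), (1 - α s)
          = (∏ s ∈ Finset.Ico N t, (1 - α s)) * (1 - α t) :=
        Finset.prod_Ico_succ_top ht _
      calc |y (t + 1)| ≤ (1 - α t) * |y t| + α t * δ := hb
        _ ≤ (1 - α t) * (δ + (∏ s ∈ Finset.Ico N t, (1 - α s)) * |y N|) + α t * δ := by
            linarith
        _ = δ + (∏ s ∈ Finset.Ico N (t + 1), (1 - α s)) * |y N| := by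
            rw [hprod]; ring
  -- the product tends to 0
  have hsum : Tendsto (fun t => ∑ s ∈ Finset.Ico N t, α s) atTop atTop := by
    have heq : (fun t => (∑ s ∈ Finset.range t, α s) + -(∑ s ∈ Finset.range N, α s))
        =ᶠ[atTop] (fun t => ∑ s ∈ Finset.Ico N t, α s) := by
      filter_upwards [eventually_ge_atTop N] with t ht
      rw [← sub_eq_add_neg, Finset.sum_Ico_eq_sub _ ht]
    exact (tendsto_atTop_add_const_right atTop (-(∑ s ∈ Finset.range N, α s)) hαdiv).congr' heq
  have hexp : Tendsto (fun t => Real.exp (-(∑ s ∈ Finset.Ico N t, α s))) atTop (nhds 0) :=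
    Real.tendsto_exp_atBot.comp (tendsto_neg_atTop_atBot.comp hsum)
  have hP : Tendsto (fun t => ∏ s ∈ Finset.Ico N t, (1 - α s)) atTop (nhds 0) := by
    apply squeeze_zero (fun t => Finset.prod_nonneg fun s _ => h1 s) (fun t => ?_) hexp
    calc ∏ s ∈ Finset.Ico N t, (1 - α s)
        ≤ ∏ s ∈ Finset.Ico N t, Real.exp (-(α s)) :=
          Finset.prod_le_prod (fun s _ => h1 s) (fun s _ => h2 s)
      _ = Real.exp (∑ s ∈ Finset.Ico N t, -(α s)) := (Real.exp_sum _ _).symm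
      _ = Real.exp (-(∑ s ∈ Finset.Ico N t, α s)) := by rw [Finset.sum_neg_distrib]
  have hPy : Tendsto (fun t => (∏ s ∈ Finset.Ico N t, (1 - α s)) * |y N|) atTop (nhds 0) := by
    simpa using hP.mul_const |y N|
  obtain ⟨M, hM⟩ := (Metric.tendsto_atTop.mp hPy) δ hδpos
  refine ⟨max N M, fun t ht => ?_⟩
  have htN : N ≤ t := le_trans (le_max_left _ _) ht
  have htM : M ≤ t := le_trans (le_max_right _ _) ht
  have h5 := hM t htM
  rw [Real.dist_eq, sub_zero] at h5
  have h6 : (∏ s ∈ Finset.Ico N t, (1 - α s)) * |y N| < δ :=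
    lt_of_abs_lt h5
  have h7 := key t htN
  rw [Real.dist_eq, sub_zero]
  calc |y t| ≤ δ + (∏ s ∈ Finset.Ico N t, (1 - α s)) * |y N| := h7
    _ < δ + δ := by linarith
    _ < e := by rw [hδdef]; linarith
end
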